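/- Let ξ ∈ ℝ³ with ξ ≠ 0, and let N₁(ξ) be the linear operator on ℂ³_ξ × ℂ³_ξ defined by N₁(ξ)(X, Y) = (iξ × Y, −iξ × X). Then for every λ ∈ ℂ with λ ≠ i|ξ| and λ ≠ −i|ξ|, the operator λ − N₁(ξ) is invertible on ℂ³_ξ × ℂ³_ξ, and its inverse has operator norm ‖(λ − N₁(ξ))^{−1}‖ = max_{j = ±1} |λ − j i|ξ||^{−1}, where the operator norm is taken with respect to the standard Hermitian norm on ℂ³ × ℂ³ restricted to ℂ³_ξ × ℂ³_ξ. -/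

import Mathlib

set_option maxHeartbeats 1000000
set_option synthInstance.maxHeartbeats 200000


noncomputable section

/-- The cross product `ξ × b` of a real vector `ξ ∈ ℝ³` with a complex vector `b ∈ ℂ³`,
taken componentwise. -/
def crossRC (ξ : EuclideanSpace ℝ (Fin 3)) (b : EuclideanSpace ℂ (Fin 3)) :
    EuclideanSpace ℂ (Fin 3) :=
  (WithLp.equiv 2 (Fin 3 → ℂ)).symm
    ![(ξ 1 : ℂ) * b 2 - (ξ 2 : ℂ) * b 1,
      (ξ 2 : ℂ) * b 0 - (ξ 0 : ℂ) * b 2,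
      (ξ 0 : ℂ) * b 1 - (ξ 1 : ℂ) * b 0]

/-- The (non-conjugated) dot product `y · ξ` of a complex vector with a real vector, as a
linear functional on `ℂ³`. -/
def dotLin (ξ : EuclideanSpace ℝ (Fin 3)) : EuclideanSpace ℂ (Fin 3) →ₗ[ℂ] ℂ where
  toFun y := ∑ i, y i * (ξ i : ℂ)
  map_add' y z := by
    simp [PiLp.add_apply, add_mul, Finset.sum_add_distrib]
  map_smul' c y := by
    simp [PiLp.smul_apply, Finset.mul_sum, mul_assoc, smul_eq_mul]

/-- `ℂ³_ξ = {y ∈ ℂ³ : y·ξ = 0}`, as a subspace of `ℂ³` with the standard Hermitian norm. -/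
def Cxi (ξ : EuclideanSpace ℝ (Fin 3)) : Submodule ℂ (EuclideanSpace ℂ (Fin 3)) :=
  LinearMap.ker (dotLin ξ)

/-- `ℂ³_ξ × ℂ³_ξ`, normed with the Hermitian (ℓ²) norm of `ℂ³ × ℂ³` restricted to it. -/
abbrev CxiProd (ξ : EuclideanSpace ℝ (Fin 3)) :=
  WithLp 2 (Cxi ξ × Cxi ξ)

-- component values of crossRC
lemma crossRC_apply0 (ξ : EuclideanSpace ℝ (Fin 3)) (b : EuclideanSpace ℂ (Fin 3)) :
    crossRC ξ b 0 = (ξ 1 : ℂ) * b 2 - (ξ 2 : ℂ) * b 1 := rfl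
lemma crossRC_apply1 (ξ : EuclideanSpace ℝ (Fin 3)) (b : EuclideanSpace ℂ (Fin 3)) :
    crossRC ξ b 1 = (ξ 2 : ℂ) * b 0 - (ξ 0 : ℂ) * b 2 := rfl
lemma crossRC_apply2 (ξ : EuclideanSpace ℝ (Fin 3)) (b : EuclideanSpace ℂ (Fin 3)) :
    crossRC ξ b 2 = (ξ 0 : ℂ) * b 1 - (ξ 1 : ℂ) * b 0 := rfl

lemma crossRC_smul (ξ : EuclideanSpace ℝ (Fin 3)) (c : ℂ) (b : EuclideanSpace ℂ (Fin 3)) :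
    crossRC ξ (c • b) = c • crossRC ξ b := by
  ext i
  fin_cases i <;>
    simp [crossRC, PiLp.smul_apply, smul_eq_mul] <;> ring

lemma crossRC_add (ξ : EuclideanSpace ℝ (Fin 3)) (a b : EuclideanSpace ℂ (Fin 3)) :
    crossRC ξ (a + b) = crossRC ξ a + crossRC ξ b := by
  ext i
  fin_cases i <;>
    simp [crossRC, PiLp.add_apply] <;> ring

lemma dot_crossRC (ξ : EuclideanSpace ℝ (Fin 3)) (b : EuclideanSpace ℂ (Fin 3)) :
    dotLin ξ (crossRC ξ b) = 0 := by
  simp [dotLin, Fin.sum_univ_three, crossRC_apply0, crossRC_apply1, crossRC_apply2]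
  ring

lemma norm_sq_xi (ξ : EuclideanSpace ℝ (Fin 3)) :
    (‖ξ‖ : ℝ)^2 = ξ 0 ^ 2 + ξ 1 ^2 + ξ 2 ^2 := by
  rw [EuclideanSpace.norm_eq, Real.sq_sqrt (by positivity)]
  simp [Fin.sum_univ_three, sq_abs]

lemma crossRC_crossRC (ξ : EuclideanSpace ℝ (Fin 3)) (b : EuclideanSpace ℂ (Fin 3))
    (hb : dotLin ξ b = 0) :
    crossRC ξ (crossRC ξ b) = (-(‖ξ‖^2) : ℂ) • b := by
  have hb' : (ξ 0 : ℂ) * b 0 + (ξ 1 : ℂ) * b 1 + (ξ 2 : ℂ) * b 2 = 0 := by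
    have := hb
    simp [dotLin, Fin.sum_univ_three] at this
    linear_combination this
  have hn : ((‖ξ‖:ℂ))^2 = (ξ 0:ℂ)^2 + (ξ 1:ℂ)^2 + (ξ 2:ℂ)^2 := by
    have := norm_sq_xi ξ
    exact_mod_cast this
  ext i
  fin_cases i
  · simp [crossRC_apply0, crossRC_apply1, crossRC_apply2, PiLp.smul_apply, smul_eq_mul, hn]
    linear_combination (ξ 0 : ℂ) * hb'
  · simp [crossRC_apply0, crossRC_apply1, crossRC_apply2, PiLp.smul_apply, smul_eq_mul, hn]
    linear_combination (ξ 1 : ℂ) * hb'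
  · simp [crossRC_apply0, crossRC_apply1, crossRC_apply2, PiLp.smul_apply, smul_eq_mul, hn]
    linear_combination (ξ 2 : ℂ) * hb'

open scoped ComplexInnerProductSpace

noncomputable instance instIPCxi (ξ : EuclideanSpace ℝ (Fin 3)) :
    InnerProductSpace ℂ (Cxi ξ) := inferInstance

noncomputable instance instIPCxiProd (ξ : EuclideanSpace ℝ (Fin 3)) :
    InnerProductSpace ℂ (CxiProd ξ) := inferInstance

lemma cxi_inner_smul_right (ξ : EuclideanSpace ℝ (Fin 3)) (x y : CxiProd ξ) (r : ℂ) :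
    ⟪x, r • y⟫ = r * ⟪x, y⟫ := inner_smul_right (𝕜 := ℂ) (E := CxiProd ξ) x y r

lemma cxi_inner_smul_left (ξ : EuclideanSpace ℝ (Fin 3)) (x y : CxiProd ξ) (r : ℂ) :
    ⟪r • x, y⟫ = (starRingEnd ℂ) r * ⟪x, y⟫ := inner_smul_left (𝕜 := ℂ) (E := CxiProd ξ) x y r

lemma inner_crossRC (ξ : EuclideanSpace ℝ (Fin 3)) (y z : EuclideanSpace ℂ (Fin 3)) :
    ⟪crossRC ξ y, z⟫ = -⟪y, crossRC ξ z⟫ := by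
  simp only [PiLp.inner_apply, RCLike.inner_apply, Fin.sum_univ_three,
    crossRC_apply0, crossRC_apply1, crossRC_apply2, map_sub, map_mul,
    Complex.conj_ofReal]
  ring

lemma CxiProd.ext' {ξ : EuclideanSpace ℝ (Fin 3)} {p q : CxiProd ξ}
    (h1 : ((p.ofLp.1 : Cxi ξ) : EuclideanSpace ℂ (Fin 3)) = ((q.ofLp.1 : Cxi ξ) : EuclideanSpace ℂ (Fin 3)))
    (h2 : ((p.ofLp.2 : Cxi ξ) : EuclideanSpace ℂ (Fin 3)) = ((q.ofLp.2 : Cxi ξ) : EuclideanSpace ℂ (Fin 3))) :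
    p = q := by
  have : (WithLp.equiv 2 _) p = (WithLp.equiv 2 _) q :=
    Prod.ext (Subtype.ext h1) (Subtype.ext h2)
  exact (WithLp.equiv 2 _).injective this

lemma exists_real_perp (ξ : EuclideanSpace ℝ (Fin 3)) (hξ : ξ ≠ 0) :
    ∃ e' : EuclideanSpace ℂ (Fin 3),
      dotLin ξ e' = 0 ∧ (∀ i, (e' i).im = 0) ∧ e' ≠ 0 := by
  by_cases h0 : ξ 0 = 0
  · have h12 : ξ 1 ≠ 0 ∨ ξ 2 ≠ 0 := by
      by_contra h
      push_neg at h
      apply hξ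
      ext i
      fin_cases i <;> simp [h0, h.1, h.2]
    refine ⟨(WithLp.equiv 2 (Fin 3 → ℂ)).symm ![0, (ξ 2 : ℂ), -(ξ 1 : ℂ)], ?_, ?_, ?_⟩
    · simp [dotLin, Fin.sum_univ_three]
      ring
    · intro i
      fin_cases i <;> simp
    · intro h
      rcases h12 with h1 | h2
      · apply h1
        have : ((WithLp.equiv 2 (Fin 3 → ℂ)).symm ![0, (ξ 2 : ℂ), -(ξ 1 : ℂ)]) 2 = 0 := by
          rw [h]; rfl
        simpa using this
      · apply h2
        have : ((WithLp.equiv 2 (Fin 3 → ℂ)).symm ![0, (ξ 2 : ℂ), -(ξ 1 : ℂ)]) 1 = 0 := by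
          rw [h]; rfl
        simpa using this
  · refine ⟨(WithLp.equiv 2 (Fin 3 → ℂ)).symm ![-(ξ 2 : ℂ), 0, (ξ 0 : ℂ)], ?_, ?_, ?_⟩
    · simp [dotLin, Fin.sum_univ_three]
      ring
    · intro i
      fin_cases i <;> simp
    · intro h
      apply h0
      have : ((WithLp.equiv 2 (Fin 3 → ℂ)).symm ![-(ξ 2 : ℂ), 0, (ξ 0 : ℂ)]) 2 = 0 := by
        rw [h]; rfl
      simpa using this

lemma exists_eigen (ξ : EuclideanSpace ℝ (Fin 3)) (hξ : ξ ≠ 0) :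
    ∃ y : EuclideanSpace ℂ (Fin 3),
      dotLin ξ y = 0 ∧ y ≠ 0 ∧ Complex.I • crossRC ξ y = (‖ξ‖ : ℂ) • y := by
  obtain ⟨e', hd, him, hne⟩ := exists_real_perp ξ hξ
  set f' := crossRC ξ e' with hf'
  have hdf : dotLin ξ f' = 0 := dot_crossRC ξ e'
  have hff : crossRC ξ f' = (-(‖ξ‖ ^ 2) : ℂ) • e' := crossRC_crossRC ξ e' hd
  have himf : ∀ i, (f' i).im = 0 := by
    intro i
    fin_cases i <;>
      simp [hf', crossRC_apply0, crossRC_apply1, crossRC_apply2, Complex.sub_im,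
        Complex.mul_im, him]
  have hrpos : (0:ℝ) < ‖ξ‖ := norm_pos_iff.mpr hξ
  refine ⟨(‖ξ‖ : ℂ) • e' + Complex.I • f', ?_, ?_, ?_⟩
  · simp [map_add, map_smul, hd, hdf]
  · -- nonzero
    intro h
    apply hne
    ext i
    have hi : ((‖ξ‖ : ℂ) • e' + Complex.I • f') i = 0 := by rw [h]; rfl
    have : ((‖ξ‖ : ℂ) * e' i + Complex.I * f' i) = 0 := by
      simpa [PiLp.add_apply, PiLp.smul_apply, smul_eq_mul] using hi
    have hre := congrArg Complex.re this
    simp [Complex.add_re, Complex.mul_re, Complex.ofReal_re, Complex.ofReal_im, him i,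
      Complex.I_re, Complex.I_im, himf i] at hre
    have : (e' i).re = 0 := by
      rcases hre with h' | h'
      · exact absurd h' hξ
      · exact h'
    simp [Complex.ext_iff, this, him i]
  · rw [crossRC_add, crossRC_smul, crossRC_smul, ← hf', hff]
    match_scalars
    all_goals try ring
    all_goals linear_combination (-((‖ξ‖:ℂ)^2)) * Complex.I_mul_I
/- STATEMENT 1: for `ξ ≠ 0` and `N₁(ξ)(X, Y) = (iξ × Y, −iξ × X)` on `ℂ³_ξ × ℂ³_ξ`, for every
`λ ∈ ℂ` with `λ ≠ ±i|ξ|` the operator `λ − N₁(ξ)` is invertible on `ℂ³_ξ × ℂ³_ξ` and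
`‖(λ − N₁(ξ))⁻¹‖ = max_{j=±1} |λ − j i |ξ||⁻¹`. -/
theorem stmt1 (ξ : EuclideanSpace ℝ (Fin 3)) (hξ : ξ ≠ 0) (lam : ℂ)
    (hp : lam ≠ Complex.I * ‖ξ‖) (hm : lam ≠ -(Complex.I * ‖ξ‖))
    (N₁ : CxiProd ξ →L[ℂ] CxiProd ξ)
    (hN₁ : ∀ p : CxiProd ξ,
      (((N₁ p).ofLp.1 : EuclideanSpace ℂ (Fin 3)) =
          Complex.I • crossRC ξ ((p.ofLp.2 : Cxi ξ) : EuclideanSpace ℂ (Fin 3)) ∧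
       ((N₁ p).ofLp.2 : EuclideanSpace ℂ (Fin 3)) =
          -(Complex.I • crossRC ξ ((p.ofLp.1 : Cxi ξ) : EuclideanSpace ℂ (Fin 3))))) :
    ∃ B : CxiProd ξ →L[ℂ] CxiProd ξ,
      (lam • (1 : CxiProd ξ →L[ℂ] CxiProd ξ) - N₁).comp B = 1 ∧
      B.comp (lam • (1 : CxiProd ξ →L[ℂ] CxiProd ξ) - N₁) = 1 ∧
      ‖B‖ = max ((‖lam - Complex.I * ‖ξ‖‖)⁻¹)
              ((‖lam + Complex.I * ‖ξ‖‖)⁻¹) := by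
  have hrpos : (0:ℝ) < ‖ξ‖ := norm_pos_iff.mpr hξ
  have hrc : ((‖ξ‖ : ℂ)) ≠ 0 := by
    exact_mod_cast hrpos.ne'
  set a : ℂ := lam - Complex.I * ‖ξ‖ with ha_def
  set b : ℂ := lam + Complex.I * ‖ξ‖ with hb_def
  have ha : a ≠ 0 := sub_ne_zero.mpr hp
  have hb : b ≠ 0 := by
    intro h
    apply hm
    linear_combination h
  set c : ℂ := (a * b)⁻¹ with hc_def
  set B : CxiProd ξ →L[ℂ] CxiProd ξ :=
    c • (lam • (1 : CxiProd ξ →L[ℂ] CxiProd ξ) + N₁) with hB_def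
  have hBapp : ∀ p : CxiProd ξ, B p = c • (lam • p + N₁ p) := by
    intro p
    simp [hB_def]
  -- key algebraic facts
  have hab : a * b = lam ^ 2 + (‖ξ‖ : ℂ) ^ 2 := by
    rw [ha_def, hb_def]
    linear_combination (-((‖ξ‖:ℂ)^2)) * Complex.I_mul_I
  have hc1 : c * (lam ^ 2 + (‖ξ‖ : ℂ) ^ 2) = 1 := by
    rw [hc_def, hab]
    exact inv_mul_cancel₀ (hab ▸ mul_ne_zero ha hb)
  -- N₁ ∘ N₁ = -‖ξ‖² • id
  have key1 : ∀ y : EuclideanSpace ℂ (Fin 3), dotLin ξ y = 0 →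
      Complex.I • crossRC ξ (-(Complex.I • crossRC ξ y)) = (-((‖ξ‖:ℂ)^2)) • y := by
    intro y hy
    rw [← neg_smul, crossRC_smul, crossRC_crossRC ξ y hy, smul_smul, smul_smul]
    congr 1
    linear_combination ((‖ξ‖:ℂ)^2) * Complex.I_mul_I
  have key2 : ∀ y : EuclideanSpace ℂ (Fin 3), dotLin ξ y = 0 →
      -(Complex.I • crossRC ξ (Complex.I • crossRC ξ y)) = (-((‖ξ‖:ℂ)^2)) • y := by
    intro y hy
    rw [crossRC_smul, crossRC_crossRC ξ y hy, smul_smul, smul_smul, ← neg_smul]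
    congr 1
    linear_combination ((‖ξ‖:ℂ)^2) * Complex.I_mul_I
  have hNN : ∀ p : CxiProd ξ, N₁ (N₁ p) = (-((‖ξ‖:ℂ)^2)) • p := by
    intro p
    obtain ⟨h1, h2⟩ := hN₁ p
    obtain ⟨g1, g2⟩ := hN₁ (N₁ p)
    have m1 : dotLin ξ ((p.ofLp.1 : Cxi ξ) : EuclideanSpace ℂ (Fin 3)) = 0 :=
      LinearMap.mem_ker.mp (p.ofLp.1 : Cxi ξ).2
    have m2 : dotLin ξ ((p.ofLp.2 : Cxi ξ) : EuclideanSpace ℂ (Fin 3)) = 0 :=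
      LinearMap.mem_ker.mp (p.ofLp.2 : Cxi ξ).2
    refine CxiProd.ext' ?_ ?_
    · rw [g1, h2]
      rw [show (((-((‖ξ‖:ℂ)^2)) • p).ofLp.1 : EuclideanSpace ℂ (Fin 3))
          = (-((‖ξ‖:ℂ)^2)) • ((p.ofLp.1 : Cxi ξ) : EuclideanSpace ℂ (Fin 3)) from rfl]
      exact key1 _ m1
    · rw [g2, h1]
      rw [show (((-((‖ξ‖:ℂ)^2)) • p).ofLp.2 : EuclideanSpace ℂ (Fin 3))
          = (-((‖ξ‖:ℂ)^2)) • ((p.ofLp.2 : Cxi ξ) : EuclideanSpace ℂ (Fin 3)) from rfl]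
      exact key2 _ m2
  -- invertibility
  have hid1 : (lam • (1 : CxiProd ξ →L[ℂ] CxiProd ξ) - N₁).comp B = 1 := by
    refine ContinuousLinearMap.ext fun p => ?_
    simp only [ContinuousLinearMap.comp_apply, ContinuousLinearMap.one_apply,
      ContinuousLinearMap.sub_apply, ContinuousLinearMap.smul_apply,
      ContinuousLinearMap.one_apply]
    rw [hBapp p]
    rw [map_smul, map_add, map_smul, hNN p]
    have : lam • (c • (lam • p + N₁ p)) - c • (lam • N₁ p + (-((‖ξ‖:ℂ)^2)) • p)
        = (c * (lam ^ 2 + (‖ξ‖:ℂ)^2)) • p := by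
      match_scalars <;> ring
    rw [this, hc1, one_smul]
  have hid2 : B.comp (lam • (1 : CxiProd ξ →L[ℂ] CxiProd ξ) - N₁) = 1 := by
    refine ContinuousLinearMap.ext fun p => ?_
    simp only [ContinuousLinearMap.comp_apply, ContinuousLinearMap.one_apply,
      ContinuousLinearMap.sub_apply, ContinuousLinearMap.smul_apply,
      ContinuousLinearMap.one_apply]
    rw [hBapp, map_sub, map_smul, hNN p]
    have : c • ((lam • (lam • p - N₁ p)) + (lam • N₁ p - (-((‖ξ‖:ℂ)^2)) • p))
        = (c * (lam ^ 2 + (‖ξ‖:ℂ)^2)) • p := by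
      match_scalars <;> ring
    rw [this, hc1, one_smul]
  -- skew-adjointness
  have hskew : ∀ u v : CxiProd ξ, ⟪N₁ u, v⟫ = -⟪u, N₁ v⟫ := by
    intro u v
    obtain ⟨hu1, hu2⟩ := hN₁ u
    obtain ⟨hv1, hv2⟩ := hN₁ v
    rw [WithLp.prod_inner_apply, WithLp.prod_inner_apply,
      Submodule.coe_inner, Submodule.coe_inner, Submodule.coe_inner, Submodule.coe_inner,
      hu1, hu2, hv1, hv2]
    simp only [inner_neg_left, inner_neg_right, inner_smul_left, inner_smul_right,
      inner_crossRC, Complex.conj_I]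
    ring
  set M : ℝ := max (‖a‖⁻¹) (‖b‖⁻¹) with hM_def
  have hM0 : 0 ≤ M := le_trans (by positivity) (le_max_left _ _)
  -- upper bound
  have hub : ‖B‖ ≤ M := by
    refine ContinuousLinearMap.opNorm_le_bound _ hM0 ?_
    intro p
    set q : CxiProd ξ := N₁ p with hq_def
    set s : ℂ := (2 * Complex.I * ‖ξ‖)⁻¹ with hs_def
    have h2Ir : (2 * Complex.I * (‖ξ‖:ℂ)) ≠ 0 := by
      refine mul_ne_zero (mul_ne_zero two_ne_zero Complex.I_ne_zero) hrc
    set pp : CxiProd ξ := (2:ℂ)⁻¹ • p + s • q with hpp_def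
    set pm : CxiProd ξ := (2:ℂ)⁻¹ • p - s • q with hpm_def
    have hsum : pp + pm = p := by
      rw [hpp_def, hpm_def]
      match_scalars <;> ring
    have hq2 : N₁ q = (-((‖ξ‖:ℂ)^2)) • p := hNN p
    have hqq : ⟪q, q⟫ = (‖ξ‖:ℂ)^2 * ⟪p, p⟫ := by
      have h1 : ⟪q, q⟫ = -⟪p, N₁ q⟫ := hskew p q
      rw [h1, hq2, cxi_inner_smul_right]
      ring
    have hqp : ⟪q, p⟫ = -⟪p, q⟫ := hskew p p
    have hcs : (starRingEnd ℂ) s = -s := by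
      rw [hs_def, map_inv₀, ← inv_neg]
      congr 1
      rw [map_mul, map_mul, map_ofNat, Complex.conj_I, Complex.conj_ofReal]
      ring
    have hs1 : s * (2 * Complex.I * (‖ξ‖:ℂ)) = 1 := inv_mul_cancel₀ h2Ir
    have hs2 : s^2 * (‖ξ‖:ℂ)^2 = -(4⁻¹) := by
      have h4 : (4:ℂ) ≠ 0 := by norm_num
      have h5 : s^2 * (2 * Complex.I * (‖ξ‖:ℂ))^2 = 1 := by rw [← mul_pow, hs1, one_pow]
      linear_combination (-(1/4:ℂ)) * h5 + s^2 * (‖ξ‖:ℂ)^2 * Complex.I_mul_I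
    have hortho : ⟪pp, pm⟫ = 0 := by
      rw [hpp_def, hpm_def]
      simp only [inner_add_left, inner_sub_right, cxi_inner_smul_left, cxi_inner_smul_right,
        hcs, hqq, hqp, map_inv₀, Complex.conj_ofNat]
      linear_combination (⟪p, p⟫ : ℂ) * hs2
    have hpsq : ‖p‖^2 = ‖pp‖^2 + ‖pm‖^2 := by
      have := norm_add_sq (𝕜 := ℂ) pp pm
      rw [hortho] at this
      rw [← hsum, this]
      simp
    -- B p in terms of pp, pm
    have hba : b - a = 2 * Complex.I * ‖ξ‖ := by
      rw [ha_def, hb_def]; ring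
    have e1 : c * lam = (a⁻¹ + b⁻¹) * 2⁻¹ := by
      rw [hc_def]
      field_simp
      linear_combination ((a*b)/2) * (ha_def.symm.trans rfl)
    have e2 : c = (a⁻¹ - b⁻¹) * s := by
      rw [hc_def, hs_def, ← hba]
      have hba0 : b - a ≠ 0 := by rw [hba]; exact h2Ir
      field_simp
    have hBp : B p = a⁻¹ • pp + b⁻¹ • pm := by
      rw [hBapp p, hpp_def, hpm_def, ← hq_def]
      match_scalars
      · linear_combination e1
      · linear_combination e2
    have hBnormsq : ‖B p‖^2 = (‖a‖⁻¹)^2 * ‖pp‖^2 + (‖b‖⁻¹)^2 * ‖pm‖^2 := by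
      have hoo : ⟪a⁻¹ • pp, b⁻¹ • pm⟫ = 0 := by
        rw [cxi_inner_smul_left, cxi_inner_smul_right, hortho]
        ring
      have := norm_add_sq (𝕜 := ℂ) (a⁻¹ • pp) (b⁻¹ • pm)
      rw [hoo] at this
      rw [hBp, this]
      simp [norm_smul, map_inv₀]
      ring
    have hsqle : ‖B p‖^2 ≤ (M * ‖p‖)^2 := by
      rw [hBnormsq]
      have h1 : ‖a‖⁻¹ ≤ M := le_max_left _ _
      have h2 : ‖b‖⁻¹ ≤ M := le_max_right _ _
      have key : (‖a‖⁻¹)^2 * ‖pp‖^2 + (‖b‖⁻¹)^2 * ‖pm‖^2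
          ≤ M^2 * ‖pp‖^2 + M^2 * ‖pm‖^2 := by
        gcongr <;> positivity
      calc (‖a‖⁻¹)^2 * ‖pp‖^2 + (‖b‖⁻¹)^2 * ‖pm‖^2
          ≤ M^2 * ‖pp‖^2 + M^2 * ‖pm‖^2 := key
        _ = (M * ‖p‖)^2 := by rw [mul_pow, hpsq]; ring
    have := le_of_pow_le_pow_left₀ (two_ne_zero) (by positivity) hsqle
    exact this
  -- lower bound via eigenvectors
  have hlow : ∀ (t d : ℂ) (pe : CxiProd ξ), pe ≠ 0 → N₁ pe = t • pe →
      c * (lam + t) = d → ‖d‖ ≤ ‖B‖ := by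
    intro t d pe hpe0 heig hd
    have hBpe : B pe = d • pe := by
      rw [hBapp pe, heig, ← hd]
      match_scalars
      ring
    have h1 : ‖B pe‖ ≤ ‖B‖ * ‖pe‖ := B.le_opNorm pe
    rw [hBpe, norm_smul] at h1
    have hpe : 0 < ‖pe‖ := norm_pos_iff.mpr hpe0
    have := (mul_le_mul_iff_of_pos_right hpe).mp h1
    simpa using this
  obtain ⟨y, hyd, hyne, hyA⟩ := exists_eigen ξ hξ
  have hymem : y ∈ Cxi ξ := LinearMap.mem_ker.mpr hyd
  have hcr : crossRC ξ y = (-(Complex.I * ‖ξ‖)) • y := by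
    have h := congrArg (fun z => (-Complex.I) • z) hyA
    simp only [smul_smul] at h
    rw [show (-Complex.I * Complex.I) = 1 by
      linear_combination -Complex.I_mul_I, one_smul] at h
    rw [h]
    match_scalars
    ring
  -- eigenvector for +I‖ξ‖
  have heigen : ∀ (σ : ℂ), σ * σ = -1 →
      ∃ pe : CxiProd ξ, pe ≠ 0 ∧ N₁ pe = (σ * ‖ξ‖) • pe := by
    intro σ hσ
    refine ⟨(WithLp.equiv 2 _).symm (⟨y, hymem⟩, ⟨σ • y, Submodule.smul_mem _ _ hymem⟩), ?_, ?_⟩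
    · intro h
      apply hyne
      have := congrArg (fun z : CxiProd ξ =>
        ((z.ofLp.1 : Cxi ξ) : EuclideanSpace ℂ (Fin 3))) h
      simpa using this
    · set pe : CxiProd ξ :=
        (WithLp.equiv 2 _).symm (⟨y, hymem⟩, ⟨σ • y, Submodule.smul_mem _ _ hymem⟩) with hpe_def
      obtain ⟨h1, h2⟩ := hN₁ pe
      refine CxiProd.ext' ?_ ?_
      · rw [h1]
        rw [show ((pe.ofLp.2 : Cxi ξ) : EuclideanSpace ℂ (Fin 3)) = σ • y from rfl]
        rw [show (((σ * (‖ξ‖:ℂ)) • pe).ofLp.1 : EuclideanSpace ℂ (Fin 3)) = (σ * ‖ξ‖) • y from rfl]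
        rw [crossRC_smul, hcr]
        match_scalars
        linear_combination (-(σ * (‖ξ‖:ℂ))) * Complex.I_mul_I
      · rw [h2]
        rw [show ((pe.ofLp.1 : Cxi ξ) : EuclideanSpace ℂ (Fin 3)) = y from rfl]
        rw [show (((σ * (‖ξ‖:ℂ)) • pe).ofLp.2 : EuclideanSpace ℂ (Fin 3))
            = (σ * ‖ξ‖) • (σ • y) from rfl]
        rw [hcr]
        match_scalars
        linear_combination (‖ξ‖:ℂ) * Complex.I_mul_I - (‖ξ‖:ℂ) * hσ
  have hlow1 : ‖a‖⁻¹ ≤ ‖B‖ := by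
    obtain ⟨pe, hpe0, heig⟩ := heigen Complex.I Complex.I_mul_I
    have hd : c * (lam + Complex.I * ‖ξ‖) = a⁻¹ := by
      rw [hc_def, ← hb_def, mul_inv, mul_assoc, inv_mul_cancel₀ hb, mul_one]
    have := hlow (Complex.I * ‖ξ‖) a⁻¹ pe hpe0 heig hd
    simpa [map_inv₀] using this
  have hlow2 : ‖b‖⁻¹ ≤ ‖B‖ := by
    obtain ⟨pe, hpe0, heig⟩ := heigen (-Complex.I)
      (by linear_combination Complex.I_mul_I)
    have heig' : N₁ pe = (-(Complex.I * ‖ξ‖)) • pe := by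
      rw [heig]; congr 1; ring
    have hd : c * (lam + -(Complex.I * ‖ξ‖)) = b⁻¹ := by
      rw [hc_def, ← sub_eq_add_neg, ← ha_def, mul_inv, mul_comm (a⁻¹) (b⁻¹), mul_assoc,
        inv_mul_cancel₀ ha, mul_one]
    have := hlow (-(Complex.I * ‖ξ‖)) b⁻¹ pe hpe0 heig' hd
    simpa [map_inv₀] using this
  exact ⟨B, hid1, hid2, le_antisymm hub (max_le hlow1 hlow2)⟩

end
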